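/- Trigonometric exact solution of system (2-23): Let d₁, d₂, d₃ be real constants with d₃ ≠ 0, and let α₁, α₂, C₁, C₂, C₃, C₄ be real constants. Define ψ(t,x,y) = C₁ + C₂·((α₁x + α₂y)·sin 2t + (α₁y − α₂x)·cos 2t). On the open set Ω = {(t,x,y) ∈ ℝ³ : cos ψ(t,x,y) ≠ 0}, the functions u = 6d₂(α₁² + α₂²)C₂²·sec²ψ, v = 2d₁(α₁² + α₂²)C₂²·(−2 + 3sec²ψ), w = ((α₁² + α₂²)/d₃)·(−6d₁d₂C₂²·sec²ψ + C₃·(α₁x + α₂y)·sin 2t + C₃·(α₁y − α₂x)·cos 2t + C₄) satisfy system (2-23): u_t + 2y u_x − 2x u_y = d₁(u_xx + u_yy) − uv, v_t + 2y v_x − 2x v_y = d₂(v_xx + v_yy) − uv, w_t + 2y w_x − 2x w_y = d₃(w_xx + w_yy) + uv, at every point of Ω. -/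

import Mathlib

/-- Partial derivative with respect to `t` of a function of `(t,x,y)`. -/
noncomputable def pdT (f : ℝ × ℝ × ℝ → ℝ) (p : ℝ × ℝ × ℝ) : ℝ := fderiv ℝ f p (1, 0, 0)
/-- Partial derivative with respect to `x`. -/
noncomputable def pdX (f : ℝ × ℝ × ℝ → ℝ) (p : ℝ × ℝ × ℝ) : ℝ := fderiv ℝ f p (0, 1, 0)
/-- Partial derivative with respect to `y`. -/
noncomputable def pdY (f : ℝ × ℝ × ℝ → ℝ) (p : ℝ × ℝ × ℝ) : ℝ := fderiv ℝ f p (0, 0, 1)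

/-- `(u,v,w)` solves system (2-23), the convective Lotka–Volterra system with
stream function `Ψ = x² + y²` and `k = 1`, on `Ω`. -/
def Solves223 (d₁ d₂ d₃ : ℝ) (u v w : ℝ × ℝ × ℝ → ℝ) (Ω : Set (ℝ × ℝ × ℝ)) : Prop :=
  ∀ p ∈ Ω,
    (pdT u p + 2 * p.2.2 * pdX u p - 2 * p.2.1 * pdY u p
      = d₁ * (pdX (pdX u) p + pdY (pdY u) p) - u p * v p) ∧
    (pdT v p + 2 * p.2.2 * pdX v p - 2 * p.2.1 * pdY v p
      = d₂ * (pdX (pdX v) p + pdY (pdY v) p) - u p * v p) ∧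
    (pdT w p + 2 * p.2.2 * pdX w p - 2 * p.2.1 * pdY w p
      = d₃ * (pdX (pdX w) p + pdY (pdY w) p) + u p * v p)

/-- The phase `ψ(t,x,y) = C₁ + C₂·((α₁x + α₂y)·sin 2t + (α₁y − α₂x)·cos 2t)`. -/
noncomputable def psi (α₁ α₂ C₁ C₂ : ℝ) (p : ℝ × ℝ × ℝ) : ℝ :=
  C₁ + C₂ * ((α₁ * p.2.1 + α₂ * p.2.2) * Real.sin (2 * p.1)
    + (α₁ * p.2.2 - α₂ * p.2.1) * Real.cos (2 * p.1))

noncomputable def eT : ℝ × ℝ × ℝ →L[ℝ] ℝ := ContinuousLinearMap.fst ℝ ℝ (ℝ × ℝ)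
noncomputable def eX : ℝ × ℝ × ℝ →L[ℝ] ℝ :=
  (ContinuousLinearMap.fst ℝ ℝ ℝ).comp (ContinuousLinearMap.snd ℝ ℝ (ℝ × ℝ))
noncomputable def eY : ℝ × ℝ × ℝ →L[ℝ] ℝ :=
  (ContinuousLinearMap.snd ℝ ℝ ℝ).comp (ContinuousLinearMap.snd ℝ ℝ (ℝ × ℝ))

@[simp] lemma eT_apply (v : ℝ × ℝ × ℝ) : eT v = v.1 := rfl
@[simp] lemma eX_apply (v : ℝ × ℝ × ℝ) : eX v = v.2.1 := rfl
@[simp] lemma eY_apply (v : ℝ × ℝ × ℝ) : eY v = v.2.2 := rfl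

noncomputable def dmap (a b c : ℝ) : ℝ × ℝ × ℝ →L[ℝ] ℝ := a • eT + b • eX + c • eY

@[simp] lemma dmap_apply (a b c : ℝ) (v : ℝ × ℝ × ℝ) :
    dmap a b c v = a * v.1 + b * v.2.1 + c * v.2.2 := by
  simp [dmap, smul_eq_mul]

noncomputable def psT (α₁ α₂ C₂ : ℝ) (p : ℝ × ℝ × ℝ) : ℝ :=
  2 * C₂ * ((α₁ * p.2.1 + α₂ * p.2.2) * Real.cos (2 * p.1)
    - (α₁ * p.2.2 - α₂ * p.2.1) * Real.sin (2 * p.1))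
noncomputable def psX (α₁ α₂ C₂ : ℝ) (p : ℝ × ℝ × ℝ) : ℝ :=
  C₂ * (α₁ * Real.sin (2 * p.1) - α₂ * Real.cos (2 * p.1))
noncomputable def psY (α₁ α₂ C₂ : ℝ) (p : ℝ × ℝ × ℝ) : ℝ :=
  C₂ * (α₂ * Real.sin (2 * p.1) + α₁ * Real.cos (2 * p.1))

lemma hasFDerivAt_psi (α₁ α₂ C₁ C₂ : ℝ) (p : ℝ × ℝ × ℝ) :
    HasFDerivAt (psi α₁ α₂ C₁ C₂)
      (dmap (psT α₁ α₂ C₂ p) (psX α₁ α₂ C₂ p) (psY α₁ α₂ C₂ p)) p := by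
  have ht : HasFDerivAt (fun p : ℝ × ℝ × ℝ => p.1) eT p := hasFDerivAt_fst
  have hx : HasFDerivAt (fun p : ℝ × ℝ × ℝ => p.2.1) eX p :=
    hasFDerivAt_fst.comp p hasFDerivAt_snd
  have hy : HasFDerivAt (fun p : ℝ × ℝ × ℝ => p.2.2) eY p :=
    hasFDerivAt_snd.comp p hasFDerivAt_snd
  have h2t : HasFDerivAt (fun p : ℝ × ℝ × ℝ => 2 * p.1) ((2:ℝ) • eT) p := ht.const_mul 2
  have hsin : HasFDerivAt (fun p : ℝ × ℝ × ℝ => Real.sin (2 * p.1))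
      (Real.cos (2 * p.1) • ((2:ℝ) • eT)) p :=
    by have := (Real.hasDerivAt_sin (2 * p.1)).comp_hasFDerivAt p h2t; exact this
  have hcos : HasFDerivAt (fun p : ℝ × ℝ × ℝ => Real.cos (2 * p.1))
      ((-Real.sin (2 * p.1)) • ((2:ℝ) • eT)) p :=
    by have := (Real.hasDerivAt_cos (2 * p.1)).comp_hasFDerivAt p h2t; exact this
  have hL : HasFDerivAt (fun p : ℝ × ℝ × ℝ => α₁ * p.2.1 + α₂ * p.2.2)
      (α₁ • eX + α₂ • eY) p := (hx.const_mul α₁).add (hy.const_mul α₂)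
  have hM : HasFDerivAt (fun p : ℝ × ℝ × ℝ => α₁ * p.2.2 - α₂ * p.2.1)
      (α₁ • eY - α₂ • eX) p := (hy.const_mul α₁).sub (hx.const_mul α₂)
  have h := (((hL.mul hsin).add (hM.mul hcos)).const_mul C₂).const_add C₁
  refine h.congr_fderiv (ContinuousLinearMap.ext fun v => ?_)
  simp [psT, psX, psY, dmap, smul_eq_mul]
  ring

noncomputable def G1 (s : ℝ) : ℝ := 2 * Real.sin s * ((Real.cos s)⁻¹) ^ 3
noncomputable def G2 (s : ℝ) : ℝ :=
  2 * ((Real.cos s)⁻¹) ^ 2 + 6 * (Real.sin s) ^ 2 * ((Real.cos s)⁻¹) ^ 4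

lemma hasDerivAt_secSq {s : ℝ} (hc : Real.cos s ≠ 0) :
    HasDerivAt (fun s => ((Real.cos s)⁻¹) ^ 2) (G1 s) s := by
  have h := (((Real.hasDerivAt_cos s).inv hc).pow 2)
  refine h.congr_deriv ?_
  simp only [G1, Pi.inv_apply, Nat.cast_ofNat, pow_one, neg_neg]
  ring

lemma hasDerivAt_G1 {s : ℝ} (hc : Real.cos s ≠ 0) : HasDerivAt G1 (G2 s) s := by
  have h := ((Real.hasDerivAt_sin s).const_mul 2).mul (((Real.hasDerivAt_cos s).inv hc).pow 3)
  refine h.congr_deriv ?_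
  simp only [G2, Pi.inv_apply, Pi.pow_apply, Nat.cast_ofNat, pow_one, neg_neg]
  field_simp
  linear_combination (6 * Real.sin s ^ 2 * (Real.cos s * (Real.cos s)⁻¹ + 1)) * mul_inv_cancel₀ hc

lemma G2_eq {s : ℝ} (hc : Real.cos s ≠ 0) :
    G2 s = 6 * (((Real.cos s)⁻¹) ^ 2) ^ 2 - 4 * ((Real.cos s)⁻¹) ^ 2 := by
  have h : Real.sin s ^ 2 = 1 - Real.cos s ^ 2 := Real.sin_sq s
  rw [G2, h]
  field_simp
  ring

noncomputable def secSq (α₁ α₂ C₁ C₂ : ℝ) (p : ℝ × ℝ × ℝ) : ℝ :=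
  ((Real.cos (psi α₁ α₂ C₁ C₂ p))⁻¹) ^ 2

lemma hasFDerivAt_secSq (α₁ α₂ C₁ C₂ : ℝ) {p : ℝ × ℝ × ℝ}
    (hc : Real.cos (psi α₁ α₂ C₁ C₂ p) ≠ 0) :
    HasFDerivAt (secSq α₁ α₂ C₁ C₂)
      (G1 (psi α₁ α₂ C₁ C₂ p) • dmap (psT α₁ α₂ C₂ p) (psX α₁ α₂ C₂ p) (psY α₁ α₂ C₂ p)) p :=
  (hasDerivAt_secSq hc).comp_hasFDerivAt p (hasFDerivAt_psi α₁ α₂ C₁ C₂ p)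

lemma hasFDerivAt_psX (α₁ α₂ C₂ : ℝ) (p : ℝ × ℝ × ℝ) :
    HasFDerivAt (psX α₁ α₂ C₂)
      ((2 * C₂ * (α₁ * Real.cos (2 * p.1) + α₂ * Real.sin (2 * p.1))) • eT) p := by
  have ht : HasFDerivAt (fun p : ℝ × ℝ × ℝ => p.1) eT p := hasFDerivAt_fst
  have h2t : HasFDerivAt (fun p : ℝ × ℝ × ℝ => 2 * p.1) ((2:ℝ) • eT) p := ht.const_mul 2
  have hsin : HasFDerivAt (fun p : ℝ × ℝ × ℝ => Real.sin (2 * p.1))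
      (Real.cos (2 * p.1) • ((2:ℝ) • eT)) p :=
    by have := (Real.hasDerivAt_sin (2 * p.1)).comp_hasFDerivAt p h2t; exact this
  have hcos : HasFDerivAt (fun p : ℝ × ℝ × ℝ => Real.cos (2 * p.1))
      ((-Real.sin (2 * p.1)) • ((2:ℝ) • eT)) p :=
    by have := (Real.hasDerivAt_cos (2 * p.1)).comp_hasFDerivAt p h2t; exact this
  have h := (((hsin.const_mul α₁).sub (hcos.const_mul α₂)).const_mul C₂)
  exact h.congr_fderiv (ContinuousLinearMap.ext fun v => by
    simp [smul_eq_mul]; ring)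

lemma hasFDerivAt_psY (α₁ α₂ C₂ : ℝ) (p : ℝ × ℝ × ℝ) :
    HasFDerivAt (psY α₁ α₂ C₂)
      ((2 * C₂ * (α₂ * Real.cos (2 * p.1) - α₁ * Real.sin (2 * p.1))) • eT) p := by
  have ht : HasFDerivAt (fun p : ℝ × ℝ × ℝ => p.1) eT p := hasFDerivAt_fst
  have h2t : HasFDerivAt (fun p : ℝ × ℝ × ℝ => 2 * p.1) ((2:ℝ) • eT) p := ht.const_mul 2
  have hsin : HasFDerivAt (fun p : ℝ × ℝ × ℝ => Real.sin (2 * p.1))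
      (Real.cos (2 * p.1) • ((2:ℝ) • eT)) p :=
    by have := (Real.hasDerivAt_sin (2 * p.1)).comp_hasFDerivAt p h2t; exact this
  have hcos : HasFDerivAt (fun p : ℝ × ℝ × ℝ => Real.cos (2 * p.1))
      ((-Real.sin (2 * p.1)) • ((2:ℝ) • eT)) p :=
    by have := (Real.hasDerivAt_cos (2 * p.1)).comp_hasFDerivAt p h2t; exact this
  have h := (((hsin.const_mul α₂).add (hcos.const_mul α₁)).const_mul C₂)
  exact h.congr_fderiv (ContinuousLinearMap.ext fun v => by
    simp [smul_eq_mul]; ring)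

lemma conv_identity (α₁ α₂ C₂ : ℝ) (p : ℝ × ℝ × ℝ) :
    psT α₁ α₂ C₂ p + 2 * p.2.2 * psX α₁ α₂ C₂ p - 2 * p.2.1 * psY α₁ α₂ C₂ p = 0 := by
  simp only [psT, psX, psY]; ring

lemma sq_identity (α₁ α₂ C₂ : ℝ) (p : ℝ × ℝ × ℝ) :
    psX α₁ α₂ C₂ p ^ 2 + psY α₁ α₂ C₂ p ^ 2 = C₂ ^ 2 * (α₁ ^ 2 + α₂ ^ 2) := by
  have h := Real.sin_sq_add_cos_sq (2 * p.1)
  simp only [psX, psY]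
  linear_combination (C₂ ^ 2 * (α₁ ^ 2 + α₂ ^ 2)) * h

lemma isOpen_Omega (α₁ α₂ C₁ C₂ : ℝ) :
    IsOpen {p : ℝ × ℝ × ℝ | Real.cos (psi α₁ α₂ C₁ C₂ p) ≠ 0} := by
  have hcont : Continuous fun p : ℝ × ℝ × ℝ => Real.cos (psi α₁ α₂ C₁ C₂ p) := by
    unfold psi; fun_prop
  exact isOpen_ne.preimage hcont

lemma master (α₁ α₂ C₁ C₂ a b C₁' C₂' c : ℝ) (f : ℝ × ℝ × ℝ → ℝ)
    (hf : f = fun p => a * secSq α₁ α₂ C₁ C₂ p + b * psi α₁ α₂ C₁' C₂' p + c)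
    (p : ℝ × ℝ × ℝ) (hc : Real.cos (psi α₁ α₂ C₁ C₂ p) ≠ 0) :
    (pdT f p + 2 * p.2.2 * pdX f p - 2 * p.2.1 * pdY f p = 0) ∧
    (pdX (pdX f) p + pdY (pdY f) p
      = a * (C₂ ^ 2 * (α₁ ^ 2 + α₂ ^ 2)) *
          (6 * (secSq α₁ α₂ C₁ C₂ p) ^ 2 - 4 * secSq α₁ α₂ C₁ C₂ p)) := by
  have hF : ∀ p' : ℝ × ℝ × ℝ, Real.cos (psi α₁ α₂ C₁ C₂ p') ≠ 0 →
      HasFDerivAt f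
        (a • (G1 (psi α₁ α₂ C₁ C₂ p') •
            dmap (psT α₁ α₂ C₂ p') (psX α₁ α₂ C₂ p') (psY α₁ α₂ C₂ p'))
          + b • dmap (psT α₁ α₂ C₂' p') (psX α₁ α₂ C₂' p') (psY α₁ α₂ C₂' p')) p' := by
    intro p' hc'
    rw [hf]
    exact (((hasFDerivAt_secSq α₁ α₂ C₁ C₂ hc').const_mul a).add
      ((hasFDerivAt_psi α₁ α₂ C₁' C₂' p').const_mul b)).add_const c
  have hpdT : ∀ p' , Real.cos (psi α₁ α₂ C₁ C₂ p') ≠ 0 →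
      pdT f p' = a * (G1 (psi α₁ α₂ C₁ C₂ p') * psT α₁ α₂ C₂ p') + b * psT α₁ α₂ C₂' p' := by
    intro p' hc'
    rw [pdT, (hF p' hc').fderiv]
    simp [smul_eq_mul]
  have hpdX : ∀ p' , Real.cos (psi α₁ α₂ C₁ C₂ p') ≠ 0 →
      pdX f p' = a * (G1 (psi α₁ α₂ C₁ C₂ p') * psX α₁ α₂ C₂ p') + b * psX α₁ α₂ C₂' p' := by
    intro p' hc'
    rw [pdX, (hF p' hc').fderiv]
    simp [smul_eq_mul]
  have hpdY : ∀ p' , Real.cos (psi α₁ α₂ C₁ C₂ p') ≠ 0 →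
      pdY f p' = a * (G1 (psi α₁ α₂ C₁ C₂ p') * psY α₁ α₂ C₂ p') + b * psY α₁ α₂ C₂' p' := by
    intro p' hc'
    rw [pdY, (hF p' hc').fderiv]
    simp [smul_eq_mul]
  have hmem : {p : ℝ × ℝ × ℝ | Real.cos (psi α₁ α₂ C₁ C₂ p) ≠ 0} ∈ nhds p :=
    (isOpen_Omega α₁ α₂ C₁ C₂).mem_nhds hc
  -- derivative of G1 ∘ psi
  have hG1psi : HasFDerivAt (fun p' => G1 (psi α₁ α₂ C₁ C₂ p'))
      (G2 (psi α₁ α₂ C₁ C₂ p) •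
        dmap (psT α₁ α₂ C₂ p) (psX α₁ α₂ C₂ p) (psY α₁ α₂ C₂ p)) p :=
    (hasDerivAt_G1 hc).comp_hasFDerivAt p (hasFDerivAt_psi α₁ α₂ C₁ C₂ p)
  have hXX : pdX (pdX f) p
      = a * (G2 (psi α₁ α₂ C₁ C₂ p) * psX α₁ α₂ C₂ p ^ 2) := by
    have hev : pdX f =ᶠ[nhds p]
        (fun p' => a * (G1 (psi α₁ α₂ C₁ C₂ p') * psX α₁ α₂ C₂ p')
          + b * psX α₁ α₂ C₂' p') :=
      Filter.eventually_of_mem hmem fun p' hp' => hpdX p' hp'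
    have hg : HasFDerivAt
        (fun p' => a * (G1 (psi α₁ α₂ C₁ C₂ p') * psX α₁ α₂ C₂ p')
          + b * psX α₁ α₂ C₂' p')
        (a • (G1 (psi α₁ α₂ C₁ C₂ p) •
            ((2 * C₂ * (α₁ * Real.cos (2 * p.1) + α₂ * Real.sin (2 * p.1))) • eT)
          + psX α₁ α₂ C₂ p • (G2 (psi α₁ α₂ C₁ C₂ p) •
              dmap (psT α₁ α₂ C₂ p) (psX α₁ α₂ C₂ p) (psY α₁ α₂ C₂ p)))
          + b • ((2 * C₂' * (α₁ * Real.cos (2 * p.1) + α₂ * Real.sin (2 * p.1))) • eT)) p :=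
      ((hG1psi.mul (hasFDerivAt_psX α₁ α₂ C₂ p)).const_mul a).add
        ((hasFDerivAt_psX α₁ α₂ C₂' p).const_mul b)
    rw [pdX, hev.fderiv_eq, hg.fderiv]
    simp only [ContinuousLinearMap.add_apply, ContinuousLinearMap.smul_apply, dmap_apply,
      eT_apply, eX_apply, eY_apply, smul_eq_mul]
    norm_num
    exact Or.inl (by ring)
  have hYY : pdY (pdY f) p
      = a * (G2 (psi α₁ α₂ C₁ C₂ p) * psY α₁ α₂ C₂ p ^ 2) := by
    have hev : pdY f =ᶠ[nhds p]
        (fun p' => a * (G1 (psi α₁ α₂ C₁ C₂ p') * psY α₁ α₂ C₂ p')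
          + b * psY α₁ α₂ C₂' p') :=
      Filter.eventually_of_mem hmem fun p' hp' => hpdY p' hp'
    have hg : HasFDerivAt
        (fun p' => a * (G1 (psi α₁ α₂ C₁ C₂ p') * psY α₁ α₂ C₂ p')
          + b * psY α₁ α₂ C₂' p')
        (a • (G1 (psi α₁ α₂ C₁ C₂ p) •
            ((2 * C₂ * (α₂ * Real.cos (2 * p.1) - α₁ * Real.sin (2 * p.1))) • eT)
          + psY α₁ α₂ C₂ p • (G2 (psi α₁ α₂ C₁ C₂ p) •
              dmap (psT α₁ α₂ C₂ p) (psX α₁ α₂ C₂ p) (psY α₁ α₂ C₂ p)))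
          + b • ((2 * C₂' * (α₂ * Real.cos (2 * p.1) - α₁ * Real.sin (2 * p.1))) • eT)) p :=
      ((hG1psi.mul (hasFDerivAt_psY α₁ α₂ C₂ p)).const_mul a).add
        ((hasFDerivAt_psY α₁ α₂ C₂' p).const_mul b)
    rw [pdY, hev.fderiv_eq, hg.fderiv]
    simp only [ContinuousLinearMap.add_apply, ContinuousLinearMap.smul_apply, dmap_apply,
      eT_apply, eX_apply, eY_apply, smul_eq_mul]
    norm_num
    exact Or.inl (by ring)
  constructor
  · rw [hpdT p hc, hpdX p hc, hpdY p hc]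
    have h1 := conv_identity α₁ α₂ C₂ p
    have h2 := conv_identity α₁ α₂ C₂' p
    linear_combination a * G1 (psi α₁ α₂ C₁ C₂ p) * h1 + b * h2
  · rw [hXX, hYY, G2_eq hc]
    have h3 := sq_identity α₁ α₂ C₂ p
    rw [secSq]
    linear_combination
      a * (6 * (((Real.cos (psi α₁ α₂ C₁ C₂ p))⁻¹) ^ 2) ^ 2
        - 4 * ((Real.cos (psi α₁ α₂ C₁ C₂ p))⁻¹) ^ 2) * h3

/-- Trigonometric exact solution of system (2-23): on `Ω = {cos ψ ≠ 0}` the functions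
`u = 6d₂(α₁²+α₂²)C₂² sec²ψ`, `v = 2d₁(α₁²+α₂²)C₂²(−2+3sec²ψ)`,
`w = ((α₁²+α₂²)/d₃)(−6d₁d₂C₂² sec²ψ + C₃(α₁x+α₂y)sin 2t + C₃(α₁y−α₂x)cos 2t + C₄)`
solve system (2-23). -/
theorem trigonometric_exact_solution
    (d₁ d₂ d₃ α₁ α₂ C₁ C₂ C₃ C₄ : ℝ) (hd₃ : d₃ ≠ 0) :
    Solves223 d₁ d₂ d₃
      (fun p => 6 * d₂ * (α₁ ^ 2 + α₂ ^ 2) * C₂ ^ 2 *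
        ((Real.cos (psi α₁ α₂ C₁ C₂ p))⁻¹) ^ 2)
      (fun p => 2 * d₁ * (α₁ ^ 2 + α₂ ^ 2) * C₂ ^ 2 *
        (-2 + 3 * ((Real.cos (psi α₁ α₂ C₁ C₂ p))⁻¹) ^ 2))
      (fun p => ((α₁ ^ 2 + α₂ ^ 2) / d₃) *
        (-(6 * d₁ * d₂ * C₂ ^ 2) * ((Real.cos (psi α₁ α₂ C₁ C₂ p))⁻¹) ^ 2
          + C₃ * (α₁ * p.2.1 + α₂ * p.2.2) * Real.sin (2 * p.1)
          + C₃ * (α₁ * p.2.2 - α₂ * p.2.1) * Real.cos (2 * p.1) + C₄))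
      {p : ℝ × ℝ × ℝ | Real.cos (psi α₁ α₂ C₁ C₂ p) ≠ 0} := by
  intro p hp
  have hc : Real.cos (psi α₁ α₂ C₁ C₂ p) ≠ 0 := hp
  obtain ⟨hu1, hu2⟩ := master α₁ α₂ C₁ C₂ (6 * d₂ * (α₁ ^ 2 + α₂ ^ 2) * C₂ ^ 2) 0 0 0 0
    (fun p => 6 * d₂ * (α₁ ^ 2 + α₂ ^ 2) * C₂ ^ 2 *
      ((Real.cos (psi α₁ α₂ C₁ C₂ p))⁻¹) ^ 2)
    (by funext q; simp only [secSq]; ring) p hc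
  obtain ⟨hv1, hv2⟩ := master α₁ α₂ C₁ C₂ (6 * d₁ * (α₁ ^ 2 + α₂ ^ 2) * C₂ ^ 2) 0 0 0
    (-(4 * d₁ * (α₁ ^ 2 + α₂ ^ 2) * C₂ ^ 2))
    (fun p => 2 * d₁ * (α₁ ^ 2 + α₂ ^ 2) * C₂ ^ 2 *
      (-2 + 3 * ((Real.cos (psi α₁ α₂ C₁ C₂ p))⁻¹) ^ 2))
    (by funext q; simp only [secSq]; ring) p hc
  obtain ⟨hw1, hw2⟩ := master α₁ α₂ C₁ C₂
    ((α₁ ^ 2 + α₂ ^ 2) / d₃ * (-(6 * d₁ * d₂ * C₂ ^ 2))) ((α₁ ^ 2 + α₂ ^ 2) / d₃) C₄ C₃ 0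
    (fun p => ((α₁ ^ 2 + α₂ ^ 2) / d₃) *
      (-(6 * d₁ * d₂ * C₂ ^ 2) * ((Real.cos (psi α₁ α₂ C₁ C₂ p))⁻¹) ^ 2
        + C₃ * (α₁ * p.2.1 + α₂ * p.2.2) * Real.sin (2 * p.1)
        + C₃ * (α₁ * p.2.2 - α₂ * p.2.1) * Real.cos (2 * p.1) + C₄))
    (by funext q; simp only [secSq, psi]; ring) p hc
  simp only [secSq] at hu2 hv2 hw2
  have hw3 : d₃ * ((α₁ ^ 2 + α₂ ^ 2) / d₃ * (-(6 * d₁ * d₂ * C₂ ^ 2)))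
      = (α₁ ^ 2 + α₂ ^ 2) * (-(6 * d₁ * d₂ * C₂ ^ 2)) := by
    field_simp
  refine ⟨?_, ?_, ?_⟩
  · linear_combination hu1 - d₁ * hu2
  · linear_combination hv1 - d₂ * hv2
  · linear_combination hw1 - d₃ * hw2
      - (C₂ ^ 2 * (α₁ ^ 2 + α₂ ^ 2)) *
        (6 * (((Real.cos (psi α₁ α₂ C₁ C₂ p))⁻¹) ^ 2) ^ 2
          - 4 * ((Real.cos (psi α₁ α₂ C₁ C₂ p))⁻¹) ^ 2) * hw3
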